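/- Fix D ≥ 1, ε > 0 and 0 < δ₁ < ε. For 0 < δ ≤ δ₁ and z ∈ V, let C_z^δ denote the convex hull of H_z^δ ∪ H_z^{δ₁}. Then for every z ∈ V and every 0 < δ' < δ ≤ δ₁, one has closure(C_z^δ) ⊆ closure(C_z^{δ'}). -/
import Mathlib

/-- `r` is a half-integer: `r = n/2` with `n` an odd integer. -/
def IsHalfInt (r : ℝ) : Prop := ∃ n : ℤ, Odd n ∧ r = (n : ℝ) / 2

/-- `V`: the set of points of `ℝ^D` having exactly `D - 1` integer coordinates, the
remaining coordinate being a half-integer. -/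
def Vset (D : ℕ) : Set (Fin D → ℝ) :=
  {z | ∃ k₀ : Fin D, IsHalfInt (z k₀) ∧ ∀ k : Fin D, k ≠ k₀ → ∃ m : ℤ, z k = (m : ℝ)}

/-- The open box `H_z^δ`: coordinates with `z_k ∈ ℤ` are within `(ε-δ)/2` of `ε z_k`,
coordinates with `z_k` a half-integer are within `δ/4` of `ε z_k`. -/
def Hcube (D : ℕ) (ε δ : ℝ) (z : Fin D → ℝ) : Set (Fin D → ℝ) :=
  {a | ∀ k, ((∃ m : ℤ, z k = (m : ℝ)) → |a k - ε * z k| < (ε - δ) / 2) ∧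
            (IsHalfInt (z k) → |a k - ε * z k| < δ / 4)}

lemma not_isHalfInt_int {r : ℝ} (m : ℤ) (hm : r = (m : ℝ)) : ¬ IsHalfInt r := by
  rintro ⟨n, hn, hr⟩
  have : (n : ℝ) = 2 * m := by rw [hm] at hr; linarith
  have : n = 2 * m := by exact_mod_cast this
  exact (Int.not_odd_iff_even.mpr ⟨m, by omega⟩) hn

/-- Lemma 5.2 (2): for `0 < δ' < δ ≤ δ₁ < ε` and `z ∈ V`, with
`C_z^δ = conv(H_z^δ ∪ H_z^{δ₁})`, one has `closure(C_z^δ) ⊆ closure(C_z^{δ'})`. -/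
theorem convex_hull_domains_monotone (D : ℕ) (hD : 1 ≤ D) (ε δ₁ δ δ' : ℝ)
    (hδ₁0 : 0 < δ₁) (hδ₁ε : δ₁ < ε) (hδ'0 : 0 < δ') (hδ'δ : δ' < δ) (hδδ₁ : δ ≤ δ₁)
    (z : Fin D → ℝ) (hz : z ∈ Vset D) :
    closure (convexHull ℝ (Hcube D ε δ z ∪ Hcube D ε δ₁ z)) ⊆
      closure (convexHull ℝ (Hcube D ε δ' z ∪ Hcube D ε δ₁ z)) := by
  apply closure_mono
  apply convexHull_min _ (convex_convexHull ℝ _)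
  apply Set.union_subset _ ((Set.subset_union_right).trans (subset_convexHull ℝ _))
  -- Hcube δ ⊆ convexHull
  intro a ha
  obtain ⟨k₀, hk₀, hint⟩ := hz
  have hδ0 : 0 < δ := hδ'0.trans hδ'δ
  have hεδ : 0 < ε - δ := by linarith
  have hεδ' : 0 < ε - δ' := by linarith
  have hεδ₁ : 0 < ε - δ₁ := by linarith
  have hden : 0 < δ₁ - δ' := by linarith
  set d : Fin D → ℝ := fun k => a k - ε * z k with hd
  set b' : Fin D → ℝ := fun k =>
    if k = k₀ then ε * z k + (δ'/δ) * d k else ε * z k + ((ε-δ')/(ε-δ)) * d k with hb'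
  set b : Fin D → ℝ := fun k =>
    if k = k₀ then ε * z k + (δ₁/δ) * d k else ε * z k + ((ε-δ₁)/(ε-δ)) * d k with hb
  have hb'mem : b' ∈ Hcube D ε δ' z := by
    intro k
    constructor
    · rintro ⟨m, hm⟩
      have hk : k ≠ k₀ := by rintro rfl; exact not_isHalfInt_int m hm hk₀
      have hdk : |d k| < (ε - δ) / 2 := (ha k).1 ⟨m, hm⟩
      simp only [hb', if_neg hk]
      have : |(ε-δ')/(ε-δ) * d k| = (ε-δ')/(ε-δ) * |d k| := by
        rw [abs_mul, abs_of_pos (by positivity)]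
      rw [show ε * z k + (ε-δ')/(ε-δ) * d k - ε * z k = (ε-δ')/(ε-δ) * d k by ring, this]
      calc (ε-δ')/(ε-δ) * |d k| < (ε-δ')/(ε-δ) * ((ε-δ)/2) := by
            apply mul_lt_mul_of_pos_left hdk (by positivity)
        _ = (ε - δ') / 2 := by field_simp
    · intro hhalf
      have hk : k = k₀ := by
        by_contra h
        obtain ⟨m, hm⟩ := hint k h
        exact not_isHalfInt_int m hm hhalf
      subst hk
      have hdk : |d k| < δ / 4 := (ha k).2 hhalf
      simp only [hb', if_pos rfl]
      have : |δ'/δ * d k| = δ'/δ * |d k| := by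
        rw [abs_mul, abs_of_pos (by positivity)]
      rw [show ε * z k + δ'/δ * d k - ε * z k = δ'/δ * d k by ring, this]
      calc δ'/δ * |d k| < δ'/δ * (δ/4) := by
            apply mul_lt_mul_of_pos_left hdk (by positivity)
        _ = δ' / 4 := by field_simp
  have hbmem : b ∈ Hcube D ε δ₁ z := by
    intro k
    constructor
    · rintro ⟨m, hm⟩
      have hk : k ≠ k₀ := by rintro rfl; exact not_isHalfInt_int m hm hk₀
      have hdk : |d k| < (ε - δ) / 2 := (ha k).1 ⟨m, hm⟩
      simp only [hb, if_neg hk]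
      have : |(ε-δ₁)/(ε-δ) * d k| = (ε-δ₁)/(ε-δ) * |d k| := by
        rw [abs_mul, abs_of_pos (by positivity)]
      rw [show ε * z k + (ε-δ₁)/(ε-δ) * d k - ε * z k = (ε-δ₁)/(ε-δ) * d k by ring, this]
      calc (ε-δ₁)/(ε-δ) * |d k| < (ε-δ₁)/(ε-δ) * ((ε-δ)/2) := by
            apply mul_lt_mul_of_pos_left hdk (by positivity)
        _ = (ε - δ₁) / 2 := by field_simp
    · intro hhalf
      have hk : k = k₀ := by
        by_contra h
        obtain ⟨m, hm⟩ := hint k h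
        exact not_isHalfInt_int m hm hhalf
      subst hk
      have hdk : |d k| < δ / 4 := (ha k).2 hhalf
      simp only [hb, if_pos rfl]
      have : |δ₁/δ * d k| = δ₁/δ * |d k| := by
        rw [abs_mul, abs_of_pos (by positivity)]
      rw [show ε * z k + δ₁/δ * d k - ε * z k = δ₁/δ * d k by ring, this]
      calc δ₁/δ * |d k| < δ₁/δ * (δ/4) := by
            apply mul_lt_mul_of_pos_left hdk (by positivity)
        _ = δ₁ / 4 := by field_simp
  apply segment_subset_convexHull (Set.mem_union_left _ hb'mem) (Set.mem_union_right _ hbmem)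
  refine ⟨(δ₁-δ)/(δ₁-δ'), 1 - (δ₁-δ)/(δ₁-δ'), by apply div_nonneg <;> linarith, ?_, by ring, ?_⟩
  · rw [sub_nonneg, div_le_one hden]; linarith
  · funext k
    simp only [Pi.add_apply, Pi.smul_apply, smul_eq_mul, hb', hb]
    by_cases hk : k = k₀ <;> simp only [if_pos, if_neg, hk, if_true, if_false] <;>
      · have : d k = a k - ε * z k := rfl
        field_simp
        ring
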